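/- Every epimorphism from the constant sheaf k_X of a field k on a Boolean locale X, in the category of sheaves of k-vector spaces, is isomorphic to the projection k_X ≅ k_U ⊕ k_{X\U} → k_U for a unique open U. -/

import Mathlib

universe u v

/-- A presheaf of `k`-vector spaces on a Boolean locale, presented as a presheaf on
its complete Boolean frame `B`. -/
structure KPresheaf (B : Type u) [CompleteBooleanAlgebra B] (k : Type v) [Field k] where
  obj : B → Type (max u v)
  [acg : ∀ V, AddCommGroup (obj V)]
  [mod : ∀ V, Module k (obj V)]
  res : ∀ {V W : B}, V ≤ W → obj W →ₗ[k] obj V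
  res_refl : ∀ (V : B) (x : obj V), res le_rfl x = x
  res_comp : ∀ {V W Z : B} (h1 : V ≤ W) (h2 : W ≤ Z) (x : obj Z),
    res h1 (res h2 x) = res (h1.trans h2) x

attribute [instance] KPresheaf.acg KPresheaf.mod

variable {B : Type u} [CompleteBooleanAlgebra B] {k : Type v} [Field k]

/-- The sheaf condition on a Boolean locale: the presheaf carries disjoint joins to
products. -/
def KPresheaf.IsSheaf (F : KPresheaf B k) : Prop :=
  ∀ (I : Type u) (a : I → B), (Pairwise fun i j => a i ⊓ a j = ⊥) →
    Function.Bijective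
      (fun (x : F.obj (⨆ i, a i)) (i : I) => F.res (le_iSup a i) x)

/-- A morphism of presheaves of `k`-vector spaces. -/
@[ext]
structure KHom (F G : KPresheaf B k) where
  map : ∀ V : B, F.obj V →ₗ[k] G.obj V
  natural : ∀ {V W : B} (h : V ≤ W) (x : F.obj W),
    G.res h (map W x) = map V (F.res h x)

/-- Composition of morphisms of presheaves. -/
def KHom.comp {F G H : KPresheaf B k} (g : KHom G H) (f : KHom F G) : KHom F H where
  map V := (g.map V).comp (f.map V)
  natural := by
    intro V W h x
    dsimp
    rw [g.natural, f.natural]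

/-- A morphism of sheaves is an epimorphism if it is right-cancellable against
morphisms into sheaves. -/
def KEpi {F G : KPresheaf B k} (φ : KHom F G) : Prop :=
  ∀ (H : KPresheaf B k), H.IsSheaf →
    ∀ g h : KHom G H, g.comp φ = h.comp φ → g = h

/-- A morphism of sheaves is a monomorphism if it is left-cancellable against
morphisms from sheaves. -/
def KMono {F G : KPresheaf B k} (φ : KHom F G) : Prop :=
  ∀ (H : KPresheaf B k), H.IsSheaf →
    ∀ g h : KHom H F, φ.comp g = φ.comp h → g = h


section Lemmas

private lemma iSup_eq_of_unique {ι : Sort*} (f : ι → B) (i₀ : ι)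
    (h : ∀ i, i ≠ i₀ → f i = ⊥) : (⨆ i, f i) = f i₀ := by
  refine le_antisymm (iSup_le fun i => ?_) (le_iSup f i₀)
  by_cases hi : i = i₀
  · subst hi; exact le_rfl
  · rw [h i hi]; exact bot_le

/-- Over `W ≤ ⊥`, every section of a sheaf is zero. -/
lemma KPresheaf.eq_zero_of_le_bot (H : KPresheaf B k) (hH : H.IsSheaf) {W : B}
    (hW : W ≤ ⊥) (s : H.obj W) : s = 0 := by
  have hb : (⨆ i : PEmpty.{u + 1}, (⊥ : B)) = ⊥ := by simp
  have hinj := (hH PEmpty.{u + 1} (fun _ => ⊥) (fun i => i.elim)).1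
  have hsub : ∀ t t' : H.obj (⨆ i : PEmpty.{u + 1}, (⊥ : B)), t = t' := by
    intro t t'
    exact hinj (funext fun i => i.elim)
  have h1 : W ≤ ⨆ i : PEmpty.{u + 1}, (⊥ : B) := le_trans hW (le_of_eq hb.symm)
  have h2 : (⨆ i : PEmpty.{u + 1}, (⊥ : B)) ≤ W := le_trans (le_of_eq hb) (le_trans bot_le le_rfl)
  have h2' : (⨆ i : PEmpty.{u + 1}, (⊥ : B)) ≤ W := h2
  have : H.res h1 (H.res h2 s) = s := by
    rw [H.res_comp]; exact H.res_refl W s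
  rw [hsub (H.res h2 s) 0] at this
  rw [← this, map_zero]

/-- Separation for disjoint covers, for arbitrary index types. -/
lemma KPresheaf.eq_zero_of_res_disjoint (H : KPresheaf B k) (hH : H.IsSheaf)
    {ι : Sort*} (a : ι → B) (ha : ∀ i j, i ≠ j → a i ⊓ a j = ⊥) {V : B}
    (hle : ∀ i, a i ≤ V) (hsup : V ≤ ⨆ i, a i) (s : H.obj V)
    (h : ∀ i, H.res (hle i) s = 0) : s = 0 := by
  classical
  let T : Type u := {b : B // b ≠ ⊥ ∧ ∃ i, a i = b}
  have hT : Pairwise fun t t' : T => (t : B) ⊓ (t' : B) = ⊥ := by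
    intro t t' htt'
    obtain ⟨i, hi⟩ := t.2.2
    obtain ⟨j, hj⟩ := t'.2.2
    have hij : i ≠ j := by
      rintro rfl
      exact htt' (Subtype.ext (hi ▸ hj ▸ rfl))
    rw [← hi, ← hj]; exact ha i j hij
  have hsupT : (⨆ i, a i) ≤ ⨆ t : T, (t : B) := by
    refine iSup_le fun i => ?_
    by_cases hbi : a i = ⊥
    · rw [hbi]; exact bot_le
    · exact le_iSup_of_le ⟨a i, hbi, i, rfl⟩ le_rfl
  have hTle : ∀ t : T, (t : B) ≤ V := by
    intro t
    obtain ⟨i, hi⟩ := t.2.2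
    exact hi ▸ hle i
  have hsupTle : (⨆ t : T, (t : B)) ≤ V := iSup_le hTle
  have hVsupT : V ≤ ⨆ t : T, (t : B) := hsup.trans hsupT
  have hres0 : ∀ t : T, H.res (le_iSup (fun t : T => (t : B)) t) (H.res hsupTle s) = 0 := by
    intro t
    rw [H.res_comp]
    obtain ⟨i, hi⟩ := t.2.2
    have hgen : ∀ (W : B) (hW : a i = W) (hWV : W ≤ V), H.res hWV s = 0 := by
      intro W hW hWV
      cases hW
      exact h i
    exact hgen _ hi _
  have hs' : H.res hsupTle s = 0 := by
    refine (hH T (fun t => (t : B)) hT).1 ?_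
    funext t
    show H.res (le_iSup (fun t : T => (t : B)) t) (H.res hsupTle s)
        = H.res (le_iSup (fun t : T => (t : B)) t) 0
    rw [hres0 t, map_zero]
  have : H.res hVsupT (H.res hsupTle s) = s := by
    rw [H.res_comp]; exact H.res_refl V s
  rw [hs', map_zero] at this
  exact this.symm

/-- Gluing for disjoint covers, for arbitrary index types. -/
lemma KPresheaf.exists_glue (H : KPresheaf B k) (hH : H.IsSheaf)
    {ι : Sort*} (a : ι → B) (ha : ∀ i j, i ≠ j → a i ⊓ a j = ⊥) {V : B}
    (hle : ∀ i, a i ≤ V) (hsup : V ≤ ⨆ i, a i) (x : ∀ i, H.obj (a i)) :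
    ∃ s : H.obj V, ∀ i, H.res (hle i) s = x i := by
  classical
  let T : Type u := {b : B // b ≠ ⊥ ∧ ∃ i, a i = b}
  have hT : Pairwise fun t t' : T => (t : B) ⊓ (t' : B) = ⊥ := by
    intro t t' htt'
    obtain ⟨i, hi⟩ := t.2.2
    obtain ⟨j, hj⟩ := t'.2.2
    have hij : i ≠ j := by
      rintro rfl
      exact htt' (Subtype.ext (hi ▸ hj ▸ rfl))
    rw [← hi, ← hj]; exact ha i j hij
  have hsupT : (⨆ i, a i) ≤ ⨆ t : T, (t : B) := by
    refine iSup_le fun i => ?_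
    by_cases hbi : a i = ⊥
    · rw [hbi]; exact bot_le
    · exact le_iSup_of_le ⟨a i, hbi, i, rfl⟩ le_rfl
  have hTle : ∀ t : T, (t : B) ≤ V := by
    intro t
    obtain ⟨i, hi⟩ := t.2.2
    exact hi ▸ hle i
  have hVsupT : V ≤ ⨆ t : T, (t : B) := hsup.trans hsupT
  -- the sections to glue
  let g : ∀ t : T, H.obj (t : B) := fun t =>
    H.res (le_of_eq t.2.2.choose_spec.symm) (x t.2.2.choose)
  obtain ⟨s', hs'⟩ := (hH T (fun t => (t : B)) hT).2 g
  refine ⟨H.res hVsupT s', fun i => ?_⟩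
  by_cases hbi : a i = ⊥
  · have h1 : H.res (hle i) (H.res hVsupT s') = 0 :=
      H.eq_zero_of_le_bot hH (le_of_eq hbi) _
    have h2 : x i = 0 := H.eq_zero_of_le_bot hH (le_of_eq hbi) _
    rw [h1, h2]
  · set t₀ : T := ⟨a i, hbi, i, rfl⟩ with ht₀
    have hch : a t₀.2.2.choose = a i := t₀.2.2.choose_spec
    have hii : t₀.2.2.choose = i := by
      by_contra hne
      have := ha _ _ hne
      rw [hch, inf_idem] at this
      exact hbi this
    have key : H.res (le_iSup (fun t : T => (t : B)) t₀) s' = g t₀ := congrFun hs' t₀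
    have key2 : H.res ((hle i).trans hVsupT) s' = g t₀ := key
    rw [H.res_comp]
    rw [key2]
    show H.res (le_of_eq t₀.2.2.choose_spec.symm) (x t₀.2.2.choose) = x i
    have hgen : ∀ (j : ι) (hj : j = i), ∀ (hle2 : a i ≤ a j), H.res hle2 (x j) = x i := by
      rintro j rfl hle2
      exact H.res_refl _ (x j)
    exact hgen _ hii _

/-- Separation for arbitrary (not necessarily disjoint) covers. -/
lemma KPresheaf.eq_zero_of_res_cover (H : KPresheaf B k) (hH : H.IsSheaf)
    {ι : Type*} (a : ι → B) {V : B}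
    (hle : ∀ i, a i ≤ V) (hsup : V ≤ ⨆ i, a i) (s : H.obj V)
    (h : ∀ i, H.res (hle i) s = 0) : s = 0 := by
  classical
  let r : ι → ι → Prop := WellOrderingRel
  have hwo : IsWellOrder ι r := WellOrderingRel.isWellOrder
  let a' : ι → B := fun i => a i ⊓ (⨆ j, ⨆ _ : r j i, a j)ᶜ
  have haux : ∀ {i j}, r i j → a' i ⊓ a' j = ⊥ := by
    intro i j hij
    have h1 : a' j ≤ (a i)ᶜ := by
      refine le_trans inf_le_right (compl_le_compl ?_)
      exact le_iSup_of_le i (le_iSup_of_le hij le_rfl)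
    have : a' i ⊓ a' j ≤ a i ⊓ (a i)ᶜ :=
      inf_le_inf inf_le_left h1
    rw [inf_compl_eq_bot] at this
    exact le_bot_iff.mp this
  have hdisj : ∀ i j, i ≠ j → a' i ⊓ a' j = ⊥ := by
    intro i j hij
    rcases trichotomous_of r i j with h1 | h1 | h1
    · exact haux h1
    · exact absurd h1 hij
    · rw [inf_comm]; exact haux h1
  have hcover : ∀ i, a i ≤ ⨆ j, a' j := by
    intro i
    induction i using (hwo.toIsWellFounded.wf).induction with
    | _ i IH =>
      set C : B := ⨆ j, ⨆ _ : r j i, a j with hC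
      have h1 : a i = a i ⊓ C ⊔ a' i := by
        rw [← inf_sup_left]
        rw [sup_compl_eq_top, inf_top_eq]
      rw [h1]
      refine sup_le ?_ (le_iSup a' i)
      refine le_trans inf_le_right ?_
      exact iSup_le fun j => iSup_le fun hj => IH j hj
  refine H.eq_zero_of_res_disjoint hH a' hdisj
    (fun i => le_trans inf_le_left (hle i)) (hsup.trans (iSup_le fun i => hcover i)) s ?_
  intro i
  rw [← H.res_comp (inf_le_left : a' i ≤ a i) (hle i), h i, map_zero]

end Lemmas

section Model
open scoped Classical

/-- A partition of `V` indexed by elements of `k`. -/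
def IsPart (V : B) (f : k → B) : Prop :=
  (∀ ⦃c c' : k⦄, c ≠ c' → f c ⊓ f c' = ⊥) ∧ (⨆ c, f c) = V

lemma IsPart.le {V : B} {f : k → B} (hf : IsPart V f) (c : k) : f c ≤ V :=
  hf.2 ▸ le_iSup f c

private lemma iSup_surj {f : k → B} {e : k → k} (he : Function.Surjective e) :
    ⨆ c, f (e c) = ⨆ c, f c := he.iSup_comp f

noncomputable def zeroF (V : B) : k → B := fun c => if c = 0 then V else ⊥

def convF (f g : k → B) : k → B := fun c => ⨆ a, f a ⊓ g (c - a)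

def negF (f : k → B) : k → B := fun c => f (-c)

noncomputable def smulF (V : B) (r : k) (f : k → B) : k → B :=
  if r = 0 then zeroF V else fun c => f (r⁻¹ * c)

lemma isPart_zero (V : B) : IsPart V (zeroF (k := k) V) := by
  constructor
  · intro c c' hcc'
    by_cases hc : c = 0
    · have hc' : c' ≠ 0 := fun h => hcc' (hc.trans h.symm)
      simp [zeroF, hc, hc']
    · simp [zeroF, hc]
  · rw [iSup_eq_of_unique _ 0 (fun c hc => by simp [zeroF, hc])]
    simp [zeroF]

lemma isPart_conv {V : B} {f g : k → B} (hf : IsPart V f) (hg : IsPart V g) :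
    IsPart V (convF f g) := by
  constructor
  · intro c c' hcc'
    refine le_bot_iff.mp (le_of_eq_of_le (iSup_inf_eq _ _) (iSup_le fun a => le_of_eq_of_le
      (inf_iSup_eq _ _) (iSup_le fun a' => ?_)))
    by_cases haa : a = a'
    · subst haa
      have hne : c - a ≠ c' - a := fun h => hcc' (by
        have := congrArg (· + a) h; simpa using this)
      calc f a ⊓ g (c - a) ⊓ (f a ⊓ g (c' - a)) ≤ g (c - a) ⊓ g (c' - a) :=
            inf_le_inf inf_le_right inf_le_right
        _ = ⊥ := hg.1 hne
        _ ≤ ⊥ := le_rfl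
    · calc f a ⊓ g (c - a) ⊓ (f a' ⊓ g (c' - a')) ≤ f a ⊓ f a' :=
            inf_le_inf inf_le_left inf_le_left
        _ = ⊥ := hf.1 haa
        _ ≤ ⊥ := le_rfl
  · calc (⨆ c, convF f g c) = ⨆ a, ⨆ c, f a ⊓ g (c - a) := iSup_comm
      _ = ⨆ a, f a ⊓ ⨆ c, g (c - a) := by
          exact iSup_congr fun a => (inf_iSup_eq _ _).symm
      _ = ⨆ a, f a ⊓ V := by
          refine iSup_congr fun a => ?_
          rw [iSup_surj (e := fun c => c - a) (fun b => ⟨b + a, by ring⟩), hg.2]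
      _ = (⨆ a, f a) ⊓ V := (iSup_inf_eq _ _).symm
      _ = V := by rw [hf.2, inf_idem]

lemma convF_le_comm (f g : k → B) (c : k) : convF f g c ≤ convF g f c := by
  refine iSup_le fun a => le_iSup_of_le (c - a) ?_
  rw [sub_sub_cancel, inf_comm]

lemma conv_comm (f g : k → B) : convF f g = convF g f :=
  funext fun c => le_antisymm (convF_le_comm f g c) (convF_le_comm g f c)

lemma conv_assoc (f g h : k → B) : convF (convF f g) h = convF f (convF g h) := by
  funext c
  refine le_antisymm (iSup_le fun a => ?_) (iSup_le fun a => ?_)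
  · refine le_of_eq_of_le (iSup_inf_eq _ _) (iSup_le fun b => le_iSup_of_le b ?_)
    have h1 : g (a - b) ⊓ h (c - a) ≤ convF g h (c - b) := by
      refine le_iSup_of_le (a - b) ?_
      rw [show c - b - (a - b) = c - a by ring]
    calc f b ⊓ g (a - b) ⊓ h (c - a) = f b ⊓ (g (a - b) ⊓ h (c - a)) := inf_assoc _ _ _
      _ ≤ f b ⊓ convF g h (c - b) := inf_le_inf_left _ h1
  · refine le_of_eq_of_le (inf_iSup_eq _ _) (iSup_le fun b => le_iSup_of_le (a + b) ?_)
    have h1 : f a ⊓ g b ≤ convF f g (a + b) := by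
      refine le_iSup_of_le a ?_
      rw [show a + b - a = b by ring]
    calc f a ⊓ (g b ⊓ h (c - a - b)) = f a ⊓ g b ⊓ h (c - a - b) := (inf_assoc _ _ _).symm
      _ ≤ convF f g (a + b) ⊓ h (c - (a + b)) := by
          rw [show c - a - b = c - (a + b) by ring]
          exact inf_le_inf_right _ h1

lemma zero_conv {V : B} {f : k → B} (hf : IsPart V f) : convF (zeroF V) f = f := by
  funext c
  have h1 : (⨆ a, zeroF (k := k) V a ⊓ f (c - a)) = zeroF (k := k) V (0 : k) ⊓ f (c - (0 : k)) :=
    iSup_eq_of_unique (fun a => zeroF (k := k) V a ⊓ f (c - a)) (0 : k)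
      (fun a ha => by simp [zeroF, ha])
  rw [convF, h1]
  simp only [zeroF, if_pos rfl, sub_zero]
  exact inf_eq_right.mpr (hf.le c)

lemma isPart_neg {V : B} {f : k → B} (hf : IsPart V f) : IsPart V (negF f) := by
  constructor
  · intro c c' hcc'
    exact hf.1 (fun h => hcc' (neg_injective h))
  · simp only [negF]
    rw [iSup_surj (e := fun c : k => -c) (fun b => ⟨-b, by ring⟩), hf.2]

lemma neg_conv_cancel {V : B} {f : k → B} (hf : IsPart V f) :
    convF (negF f) f = zeroF V := by
  funext c
  by_cases hc : c = 0
  · subst hc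
    have : ∀ a : k, negF f a ⊓ f (0 - a) = f (-a) := fun a => by
      simp [negF, zero_sub]
    simp only [convF, this]
    rw [iSup_surj (e := fun c : k => -c) (fun b => ⟨-b, by ring⟩), hf.2]
    simp [zeroF]
  · have : ∀ a : k, negF f a ⊓ f (c - a) = ⊥ := fun a => by
      refine hf.1 (fun h => hc ?_)
      have := congrArg (· + a) h
      simpa using this.symm
    simp only [convF, this]
    simp [zeroF, hc]

lemma isPart_smul {V : B} {f : k → B} (hf : IsPart V f) (r : k) :
    IsPart V (smulF V r f) := by
  by_cases hr : r = 0
  · rw [smulF, if_pos hr]; exact isPart_zero V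
  · rw [smulF, if_neg hr]
    constructor
    · intro c c' hcc'
      exact hf.1 (fun h => hcc' (mul_left_cancel₀ (inv_ne_zero hr) h))
    · rw [iSup_surj (e := fun c : k => r⁻¹ * c) (fun b => ⟨r * b, by field_simp⟩), hf.2]

lemma smulF_ne {V : B} {r : k} (hr : r ≠ 0) (f : k → B) :
    smulF V r f = fun c => f (r⁻¹ * c) := if_neg hr

lemma zero_smulF {V : B} (f : k → B) : smulF V 0 f = zeroF V := if_pos rfl

lemma one_smulF {V : B} (f : k → B) : smulF V 1 f = f := by
  rw [smulF_ne (one_ne_zero (α := k))]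
  funext c; simp

lemma smul_zeroF {V : B} (r : k) : smulF V r (zeroF V) = zeroF (k := k) V := by
  by_cases hr : r = 0
  · rw [hr, zero_smulF]
  · rw [smulF_ne hr]
    funext c
    have : r⁻¹ * c = 0 ↔ c = 0 := by simp [hr]
    simp only [zeroF]
    rw [if_congr this rfl rfl]

lemma mul_smulF {V : B} (r s : k) (f : k → B) :
    smulF V (r * s) f = smulF V r (smulF V s f) := by
  by_cases hr : r = 0
  · rw [hr, zero_mul, zero_smulF, zero_smulF]
  by_cases hs : s = 0
  · rw [hs, mul_zero, zero_smulF, smul_zeroF]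
  · rw [smulF_ne (mul_ne_zero hr hs), smulF_ne hr, smulF_ne hs]
    funext c
    simp only
    rw [mul_inv_rev, mul_assoc]

lemma smul_convF {V : B} {f g : k → B} (hf : IsPart V f) (hg : IsPart V g) (r : k) :
    smulF V r (convF f g) = convF (smulF V r f) (smulF V r g) := by
  by_cases hr : r = 0
  · rw [hr, zero_smulF, zero_smulF, zero_smulF, zero_conv (isPart_zero V)]
  · rw [smulF_ne hr, smulF_ne hr, smulF_ne hr]
    funext c
    show convF f g (r⁻¹ * c) = ⨆ a, f (r⁻¹ * a) ⊓ g (r⁻¹ * (c - a))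
    simp only [convF]
    refine le_antisymm (iSup_le fun a => le_iSup_of_le (r * a) ?_)
      (iSup_le fun a => le_iSup_of_le (r⁻¹ * a) ?_)
    · rw [inv_mul_cancel_left₀ hr, show r⁻¹ * (c - r * a) = r⁻¹ * c - a by field_simp]
    · rw [show r⁻¹ * c - r⁻¹ * a = r⁻¹ * (c - a) by ring]

lemma add_smul_convF {V : B} {f : k → B} (hf : IsPart V f) (r s : k) :
    smulF V (r + s) f = convF (smulF V r f) (smulF V s f) := by
  by_cases hr : r = 0
  · rw [hr, zero_add, zero_smulF, zero_conv (isPart_smul hf s)]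
  by_cases hs : s = 0
  · rw [hs, add_zero, zero_smulF, conv_comm, zero_conv (isPart_smul hf r)]
  by_cases hrs : r + s = 0
  · rw [smulF, if_pos hrs, smulF_ne hr, smulF_ne hs]
    funext c
    show zeroF V c = ⨆ a, f (r⁻¹ * a) ⊓ f (s⁻¹ * (c - a))
    by_cases hc : c = 0
    · subst hc
      have hterm : ∀ a : k, f (r⁻¹ * a) ⊓ f (s⁻¹ * ((0 : k) - a)) = f (r⁻¹ * a) := by
        intro a
        have hsr : s = -r := by linear_combination hrs
        have : s⁻¹ * ((0 : k) - a) = r⁻¹ * a := by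
          rw [hsr]; field_simp; ring
        rw [this, inf_idem]
      simp only [hterm]
      rw [iSup_surj (e := fun c : k => r⁻¹ * c) (fun b => ⟨r * b, by field_simp⟩), hf.2]
      simp [zeroF]
    · have hterm : ∀ a : k, f (r⁻¹ * a) ⊓ f (s⁻¹ * (c - a)) = ⊥ := by
        intro a
        refine hf.1 (fun h => hc ?_)
        have h1 : c - a = s * (r⁻¹ * a) := by
          rw [h]; field_simp
        have h2 : a = r * (r⁻¹ * a) := by field_simp
        calc c = a + (c - a) := by ring
          _ = r * (r⁻¹ * a) + s * (r⁻¹ * a) := by rw [← h2, ← h1]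
          _ = (r + s) * (r⁻¹ * a) := by ring
          _ = 0 := by rw [hrs, zero_mul]
      simp only [hterm]
      simp [zeroF, hc]
  · rw [smulF_ne hrs, smulF_ne hr, smulF_ne hs]
    funext c
    show f ((r + s)⁻¹ * c) = ⨆ a, f (r⁻¹ * a) ⊓ f (s⁻¹ * (c - a))
    have key : (⨆ a, f (r⁻¹ * a) ⊓ f (s⁻¹ * (c - a)))
        = f (r⁻¹ * (r * ((r + s)⁻¹ * c))) ⊓ f (s⁻¹ * (c - r * ((r + s)⁻¹ * c))) := by
      refine iSup_eq_of_unique (fun a => f (r⁻¹ * a) ⊓ f (s⁻¹ * (c - a)))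
        (r * ((r + s)⁻¹ * c)) (fun a ha => ?_)
      refine hf.1 (fun h => ha ?_)
      have h1 : c - a = s * (r⁻¹ * a) := by rw [h]; field_simp
      have h2 : a = r * (r⁻¹ * a) := by field_simp
      have h3 : c = (r + s) * (r⁻¹ * a) := by
        calc c = a + (c - a) := by ring
          _ = r * (r⁻¹ * a) + s * (r⁻¹ * a) := by rw [← h2, ← h1]
          _ = (r + s) * (r⁻¹ * a) := by ring
      rw [h3]
      field_simp
    rw [key, inv_mul_cancel_left₀ hr,
      show c - r * ((r + s)⁻¹ * c) = s * ((r + s)⁻¹ * c) by field_simp; ring,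
      inv_mul_cancel_left₀ hs, inf_idem]

end Model

section KMdef
open scoped Classical

def KMsec (k : Type v) [Field k] {B : Type u} [CompleteBooleanAlgebra B] (V : B) :
    Type (max u v) := {f : k → B // IsPart V f}

variable {V W : B}

noncomputable instance : Zero (KMsec k V) := ⟨⟨zeroF V, isPart_zero V⟩⟩
noncomputable instance : Add (KMsec k V) := ⟨fun p q => ⟨convF p.1 q.1, isPart_conv p.2 q.2⟩⟩
noncomputable instance : Neg (KMsec k V) := ⟨fun p => ⟨negF p.1, isPart_neg p.2⟩⟩

noncomputable instance : AddCommGroup (KMsec k V) where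
  add_assoc p q r := Subtype.ext (conv_assoc p.1 q.1 r.1)
  zero_add p := Subtype.ext (zero_conv p.2)
  add_zero p := Subtype.ext (by
    show convF p.1 (zeroF V) = p.1
    rw [conv_comm]; exact zero_conv p.2)
  add_comm p q := Subtype.ext (conv_comm p.1 q.1)
  neg_add_cancel p := Subtype.ext (neg_conv_cancel p.2)
  nsmul := nsmulRec
  zsmul := zsmulRec

noncomputable instance : Module k (KMsec k V) where
  smul r p := ⟨smulF V r p.1, isPart_smul p.2 r⟩
  one_smul p := Subtype.ext (one_smulF p.1)
  mul_smul r s p := Subtype.ext (mul_smulF r s p.1)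
  smul_zero r := Subtype.ext (smul_zeroF r)
  smul_add r p q := Subtype.ext (smul_convF p.2 q.2 r)
  add_smul r s p := Subtype.ext (add_smul_convF p.2 r s)
  zero_smul p := Subtype.ext (zero_smulF p.1)

lemma KMsec.add_val (p q : KMsec k V) : (p + q).1 = convF p.1 q.1 := rfl
lemma KMsec.zero_val : (0 : KMsec k V).1 = zeroF V := rfl
lemma KMsec.smul_val (r : k) (p : KMsec k V) : (r • p).1 = smulF V r p.1 := rfl

lemma respart (h : V ≤ W) {f : k → B} (hf : IsPart W f) :
    IsPart V (fun c => f c ⊓ V) := by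
  constructor
  · intro c c' hcc'
    refine le_bot_iff.mp ?_
    calc f c ⊓ V ⊓ (f c' ⊓ V) ≤ f c ⊓ f c' := inf_le_inf inf_le_left inf_le_left
      _ = ⊥ := hf.1 hcc'
  · rw [← iSup_inf_eq, hf.2, inf_eq_right.mpr h]

noncomputable def resKM (h : V ≤ W) : KMsec k W →ₗ[k] KMsec k V where
  toFun p := ⟨fun c => p.1 c ⊓ V, respart h p.2⟩
  map_add' p q := by
    refine Subtype.ext (funext fun c => ?_)
    show convF p.1 q.1 c ⊓ V = convF (fun c => p.1 c ⊓ V) (fun c => q.1 c ⊓ V) c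
    simp only [convF]
    rw [iSup_inf_eq]
    refine iSup_congr fun a => ?_
    rw [inf_inf_inf_comm, inf_idem]
  map_smul' r p := by
    refine Subtype.ext (funext fun c => ?_)
    show smulF W r p.1 c ⊓ V = smulF V r (fun c => p.1 c ⊓ V) c
    by_cases hr : r = 0
    · rw [hr, zero_smulF, zero_smulF]
      by_cases hc : c = 0
      · simp [zeroF, hc, inf_eq_right.mpr h]
      · simp [zeroF, hc]
    · rw [smulF_ne hr, smulF_ne hr]

/-- The concrete model of the constant sheaf. -/
noncomputable def KM : KPresheaf B k where
  obj V := KMsec k V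
  res h := resKM h
  res_refl V p := by
    refine Subtype.ext (funext fun c => ?_)
    show p.1 c ⊓ V = p.1 c
    exact inf_eq_left.mpr (p.2.le c)
  res_comp h1 h2 p := by
    refine Subtype.ext (funext fun c => ?_)
    show p.1 c ⊓ _ ⊓ _ = p.1 c ⊓ _
    rw [inf_assoc, inf_eq_right.mpr h1]

lemma KM_res_val (h : V ≤ W) (p : (KM : KPresheaf B k).obj W) (c : k) :
    ((KM.res h) p).1 c = p.1 c ⊓ V := rfl

lemma KM_isSheaf : (KM : KPresheaf B k).IsSheaf := by
  intro I a ha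
  constructor
  · intro p q h
    refine Subtype.ext (funext fun c => ?_)
    have hp : p.1 c = ⨆ i, p.1 c ⊓ a i := by
      rw [← inf_iSup_eq, inf_eq_left.mpr (p.2.le c)]
    have hq : q.1 c = ⨆ i, q.1 c ⊓ a i := by
      rw [← inf_iSup_eq, inf_eq_left.mpr (q.2.le c)]
    rw [hp, hq]
    refine iSup_congr fun i => ?_
    exact congrFun (congrArg Subtype.val (congrFun h i)) c
  · intro g
    have hle : ∀ (i : I) (c : k), (g i).1 c ≤ a i := fun i c => (g i).2.le c
    have hpart : IsPart (⨆ i, a i) (fun c => ⨆ i, (g i).1 c) := by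
      constructor
      · intro c c' hcc'
        refine le_bot_iff.mp (le_of_eq_of_le (iSup_inf_eq _ _) (iSup_le fun i =>
          le_of_eq_of_le (inf_iSup_eq _ _) (iSup_le fun j => ?_)))
        by_cases hij : i = j
        · subst hij
          exact le_of_eq_of_le (by rw [(g i).2.1 hcc']) le_rfl
        · calc (g i).1 c ⊓ (g j).1 c' ≤ a i ⊓ a j := inf_le_inf (hle i c) (hle j c')
            _ = ⊥ := ha hij
      · rw [iSup_comm]
        exact iSup_congr fun i => (g i).2.2
    refine ⟨⟨fun c => ⨆ i, (g i).1 c, hpart⟩, ?_⟩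
    funext i
    refine Subtype.ext (funext fun c => ?_)
    show (⨆ j, (g j).1 c) ⊓ a i = (g i).1 c
    rw [iSup_inf_eq]
    rw [iSup_eq_of_unique (fun j => (g j).1 c ⊓ a i) i (fun j hj => le_bot_iff.mp ?_)]
    · exact inf_eq_left.mpr (hle i c)
    · calc (g j).1 c ⊓ a i ≤ a j ⊓ a i := inf_le_inf (hle j c) le_rfl
        _ = ⊥ := ha hj

/-- The unit global section of the model. -/
noncomputable def unitKM : (KM : KPresheaf B k).obj ⊤ :=
  ⟨fun c => if c = 1 then ⊤ else ⊥, by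
    constructor
    · intro c c' hcc'
      by_cases hc : c = 1
      · have hc' : c' ≠ 1 := fun h => hcc' (hc.trans h.symm)
        simp [hc, hc']
      · simp [hc]
    · refine le_antisymm le_top ?_
      exact le_iSup_of_le 1 (by simp)⟩

end KMdef

section Sigma
open scoped Classical

variable {V W : B}

lemma res_piece (V : B) (p : (KM : KPresheaf B k).obj V) (c : k) :
    (KM.res (p.2.le c)) p = c • (KM.res (le_top : p.1 c ≤ ⊤)) unitKM := by
  refine Subtype.ext (funext fun d => ?_)
  show p.1 d ⊓ p.1 c = (c • (KM.res (le_top : p.1 c ≤ ⊤)) unitKM).1 d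
  show p.1 d ⊓ p.1 c = smulF (p.1 c) c ((KM.res (le_top : p.1 c ≤ ⊤)) unitKM).1 d
  by_cases hc : c = 0
  · subst hc
    rw [zero_smulF]
    by_cases hd : d = 0
    · subst hd; simp [zeroF, inf_idem]
    · rw [p.2.1 hd]
      simp [zeroF, hd]
  · rw [smulF_ne hc]
    show p.1 d ⊓ p.1 c = unitKM.1 (c⁻¹ * d) ⊓ p.1 c
    by_cases hd : d = c
    · rw [hd]
      have h1 : unitKM.1 (c⁻¹ * c) = (⊤ : B) := by
        show (if c⁻¹ * c = 1 then (⊤ : B) else ⊥) = ⊤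
        rw [if_pos (inv_mul_cancel₀ hc)]
      rw [h1, top_inf_eq, inf_idem]
    · have h1 : unitKM.1 (c⁻¹ * d) = (⊥ : B) := by
        show (if c⁻¹ * d = 1 then (⊤ : B) else ⊥) = ⊥
        rw [if_neg (fun h => hd (by field_simp at h; exact h))]
      rw [h1, p.2.1 hd, bot_inf_eq]

/-- Homomorphisms out of the model sheaf are determined by their value on the unit. -/
lemma KM_hom_ext (H : KPresheaf B k) (hH : H.IsSheaf)
    (α β : KHom (KM : KPresheaf B k) H) (h : α.map ⊤ unitKM = β.map ⊤ unitKM) :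
    α = β := by
  refine KHom.ext ?_
  funext V
  refine LinearMap.ext fun p => ?_
  have key : α.map V p - β.map V p = 0 := by
    refine H.eq_zero_of_res_disjoint hH (fun c : k => p.1 c)
      (fun c c' hcc' => p.2.1 hcc') (fun c => p.2.le c) (le_of_eq p.2.2.symm) _ fun c => ?_
    rw [map_sub, α.natural (p.2.le c) p, β.natural (p.2.le c) p, res_piece V p c,
      map_smul, map_smul, ← α.natural (le_top : p.1 c ≤ ⊤) unitKM,
      ← β.natural (le_top : p.1 c ≤ ⊤) unitKM, h, sub_self]
  exact sub_eq_zero.mp key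

variable (KX : KPresheaf B k) (hKX : KX.IsSheaf) (one : KX.obj ⊤)

/-- The underlying function of the comparison map from the model to `KX`. -/
noncomputable def sigmaFun (V : B) (p : (KM : KPresheaf B k).obj V) : KX.obj V :=
  (KX.exists_glue hKX (fun c : k => p.1 c) (fun c c' hcc' => p.2.1 hcc')
    (fun c => p.2.le c) (le_of_eq p.2.2.symm)
    (fun c => c • KX.res (le_top : p.1 c ≤ ⊤) one)).choose

lemma sigmaFun_spec (V : B) (p : (KM : KPresheaf B k).obj V) (c : k) :
    KX.res (p.2.le c) (sigmaFun KX hKX one V p) = c • KX.res (le_top : p.1 c ≤ ⊤) one :=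
  (KX.exists_glue hKX (fun c : k => p.1 c) (fun c c' hcc' => p.2.1 hcc')
    (fun c => p.2.le c) (le_of_eq p.2.2.symm)
    (fun c => c • KX.res (le_top : p.1 c ≤ ⊤) one)).choose_spec c

lemma sigmaFun_res_le (V : B) (p : (KM : KPresheaf B k).obj V) {c : k} {W : B}
    (hW : W ≤ p.1 c) (hV : W ≤ V) :
    KX.res hV (sigmaFun KX hKX one V p) = c • KX.res (le_top : W ≤ ⊤) one := by
  have h1 : KX.res hV (sigmaFun KX hKX one V p)
      = KX.res hW (KX.res (p.2.le c) (sigmaFun KX hKX one V p)) :=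
    (KX.res_comp hW (p.2.le c) _).symm
  rw [h1, sigmaFun_spec, map_smul, KX.res_comp]

lemma sigmaFun_zero (V : B) : sigmaFun KX hKX one V (0 : (KM : KPresheaf B k).obj V) = 0 := by
  refine KX.eq_zero_of_res_disjoint hKX (fun c : k => (0 : (KM : KPresheaf B k).obj V).1 c)
    (fun c c' hcc' => (0 : (KM : KPresheaf B k).obj V).2.1 hcc')
    (fun c => (0 : (KM : KPresheaf B k).obj V).2.le c)
    (le_of_eq (0 : (KM : KPresheaf B k).obj V).2.2.symm) _ fun c => ?_
  by_cases hc : c = 0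
  · subst hc
    rw [sigmaFun_spec, zero_smul]
  · refine KX.eq_zero_of_le_bot hKX ?_ _
    show zeroF V c ≤ ⊥
    simp [zeroF, hc]

/-- The comparison map from the model sheaf to `KX`. -/
noncomputable def sigmaHom : KHom (KM : KPresheaf B k) KX where
  map V :=
    { toFun := sigmaFun KX hKX one V
      map_add' := by
        intro p q
        have key : sigmaFun KX hKX one V (p + q)
            - (sigmaFun KX hKX one V p + sigmaFun KX hKX one V q) = 0 := by
          refine KX.eq_zero_of_res_disjoint hKX
            (fun cd : k × k => p.1 cd.1 ⊓ q.1 cd.2) ?_ (fun cd => inf_le_left.trans (p.2.le cd.1)) ?_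
            _ fun cd => ?_
          · rintro ⟨c, d⟩ ⟨c', d'⟩ hne
            by_cases hcc : c = c'
            · have hdd : d ≠ d' := fun h => hne (by rw [hcc, h])
              refine le_bot_iff.mp ?_
              calc p.1 c ⊓ q.1 d ⊓ (p.1 c' ⊓ q.1 d') ≤ q.1 d ⊓ q.1 d' :=
                  inf_le_inf inf_le_right inf_le_right
                _ = ⊥ := q.2.1 hdd
            · refine le_bot_iff.mp ?_
              calc p.1 c ⊓ q.1 d ⊓ (p.1 c' ⊓ q.1 d') ≤ p.1 c ⊓ p.1 c' :=
                  inf_le_inf inf_le_left inf_le_left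
                _ = ⊥ := p.2.1 hcc
          · have : (⨆ cd : k × k, p.1 cd.1 ⊓ q.1 cd.2) = V := by
              rw [iSup_prod]
              calc (⨆ c, ⨆ d, p.1 c ⊓ q.1 d) = ⨆ c, p.1 c ⊓ ⨆ d, q.1 d :=
                  iSup_congr fun c => (inf_iSup_eq _ _).symm
                _ = ⨆ c, p.1 c ⊓ V := by rw [q.2.2]
                _ = (⨆ c, p.1 c) ⊓ V := (iSup_inf_eq _ _).symm
                _ = V := by rw [p.2.2, inf_idem]
            exact le_of_eq this.symm
          · obtain ⟨c, d⟩ := cd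
            have hWpq : p.1 c ⊓ q.1 d ≤ (p + q).1 (c + d) := by
              show p.1 c ⊓ q.1 d ≤ convF p.1 q.1 (c + d)
              refine le_iSup_of_le c ?_
              rw [show c + d - c = d by ring]
            have h1 : KX.res (inf_le_left.trans (p.2.le c) : p.1 c ⊓ q.1 d ≤ V)
                (sigmaFun KX hKX one V (p + q))
                = (c + d) • KX.res (le_top : p.1 c ⊓ q.1 d ≤ ⊤) one :=
              sigmaFun_res_le KX hKX one V (p + q) hWpq _
            have h2 : KX.res (inf_le_left.trans (p.2.le c) : p.1 c ⊓ q.1 d ≤ V)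
                (sigmaFun KX hKX one V p)
                = c • KX.res (le_top : p.1 c ⊓ q.1 d ≤ ⊤) one :=
              sigmaFun_res_le KX hKX one V p inf_le_left _
            have h3 : KX.res (inf_le_left.trans (p.2.le c) : p.1 c ⊓ q.1 d ≤ V)
                (sigmaFun KX hKX one V q)
                = d • KX.res (le_top : p.1 c ⊓ q.1 d ≤ ⊤) one :=
              sigmaFun_res_le KX hKX one V q inf_le_right _
            rw [map_sub, map_add, h1, h2, h3, add_smul, sub_self]
        have := sub_eq_zero.mp key
        exact this
      map_smul' := by
        intro r p
        simp only [RingHom.id_apply]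
        by_cases hr : r = 0
        · rw [hr, zero_smul, zero_smul, sigmaFun_zero]
        · have key : sigmaFun KX hKX one V (r • p) - r • sigmaFun KX hKX one V p = 0 := by
            refine KX.eq_zero_of_res_disjoint hKX (fun c : k => p.1 c)
              (fun c c' hcc' => p.2.1 hcc') (fun c => p.2.le c) (le_of_eq p.2.2.symm) _ fun c => ?_
            have hW : p.1 c ≤ (r • p).1 (r * c) := by
              show p.1 c ≤ smulF V r p.1 (r * c)
              rw [smulF_ne hr]
              show p.1 c ≤ p.1 (r⁻¹ * (r * c))
              rw [inv_mul_cancel_left₀ hr]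
            have h1 : KX.res (p.2.le c) (sigmaFun KX hKX one V (r • p))
                = (r * c) • KX.res (le_top : p.1 c ≤ ⊤) one :=
              sigmaFun_res_le KX hKX one V (r • p) hW _
            rw [map_sub, h1, map_smul, sigmaFun_spec, ← mul_smul, sub_self]
          exact sub_eq_zero.mp key }
  natural := by
    intro V W h p
    show KX.res h (sigmaFun KX hKX one W p) = sigmaFun KX hKX one V ((KM.res h) p)
    have key : KX.res h (sigmaFun KX hKX one W p)
        - sigmaFun KX hKX one V ((KM.res h) p) = 0 := by
      refine KX.eq_zero_of_res_disjoint hKX (fun c : k => p.1 c ⊓ V)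
        ?_ (fun c => inf_le_right) ?_ _ fun c => ?_
      · intro c c' hcc'
        refine le_bot_iff.mp ?_
        calc p.1 c ⊓ V ⊓ (p.1 c' ⊓ V) ≤ p.1 c ⊓ p.1 c' := inf_le_inf inf_le_left inf_le_left
          _ = ⊥ := p.2.1 hcc'
      · have : (⨆ c, p.1 c ⊓ V) = V := by
          rw [← iSup_inf_eq, p.2.2, inf_eq_right.mpr h]
        exact le_of_eq this.symm
      · have h1 : KX.res (inf_le_right : p.1 c ⊓ V ≤ V) (KX.res h (sigmaFun KX hKX one W p))
            = c • KX.res (le_top : p.1 c ⊓ V ≤ ⊤) one := by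
          rw [KX.res_comp]
          exact sigmaFun_res_le KX hKX one W p inf_le_left _
        have h2 : KX.res (inf_le_right : p.1 c ⊓ V ≤ V)
            (sigmaFun KX hKX one V ((KM.res h) p))
            = c • KX.res (le_top : p.1 c ⊓ V ≤ ⊤) one := by
          refine sigmaFun_res_le KX hKX one V ((KM.res h) p) ?_ _
          show p.1 c ⊓ V ≤ ((KM.res h) p).1 c
          exact le_of_eq rfl
        rw [map_sub, h1, h2, sub_self]
    exact sub_eq_zero.mp key

lemma sigmaHom_unit : (sigmaHom KX hKX one).map ⊤ unitKM = one := by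
  have hW : (⊤ : B) ≤ unitKM.1 (1 : k) := le_of_eq (by
    show (⊤ : B) = if (1 : k) = 1 then ⊤ else ⊥
    rw [if_pos rfl])
  have h1 : KX.res (le_rfl : (⊤ : B) ≤ ⊤) (sigmaFun KX hKX one ⊤ unitKM)
      = (1 : k) • KX.res (le_top : (⊤ : B) ≤ ⊤) one :=
    sigmaFun_res_le KX hKX one ⊤ unitKM hW le_rfl
  rw [KX.res_refl, one_smul, KX.res_refl] at h1
  exact h1

end Sigma

section Push

/-- Pushforward of a sheaf along the inclusion of the open `Z`. -/
def push (G : KPresheaf B k) (Z : B) : KPresheaf B k where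
  obj V := G.obj (V ⊓ Z)
  res h := G.res (inf_le_inf_right Z h)
  res_refl V x := G.res_refl (V ⊓ Z) x
  res_comp h1 h2 x := G.res_comp _ _ x

lemma push_isSheaf (G : KPresheaf B k) (hG : G.IsSheaf) (Z : B) : (push G Z).IsSheaf := by
  intro I a ha
  have hdis : ∀ i j : I, i ≠ j → (a i ⊓ Z) ⊓ (a j ⊓ Z) = ⊥ := by
    intro i j hij
    refine le_bot_iff.mp ?_
    calc (a i ⊓ Z) ⊓ (a j ⊓ Z) ≤ a i ⊓ a j := inf_le_inf inf_le_left inf_le_left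
      _ = ⊥ := ha hij
  have hle : ∀ i : I, a i ⊓ Z ≤ (⨆ i, a i) ⊓ Z := fun i => inf_le_inf_right Z (le_iSup a i)
  have hsup : (⨆ i, a i) ⊓ Z ≤ ⨆ i, a i ⊓ Z := le_of_eq (iSup_inf_eq a Z)
  constructor
  · intro x y hxy
    have key : x - y = 0 := by
      refine G.eq_zero_of_res_disjoint hG (fun i => a i ⊓ Z) hdis hle hsup _ fun i => ?_
      refine (map_sub (G.res (hle i)) x y).trans ?_
      show (push G Z).res (le_iSup a i) x - (push G Z).res (le_iSup a i) y = 0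
      have h2 : (push G Z).res (le_iSup a i) x = (push G Z).res (le_iSup a i) y :=
        congrFun hxy i
      rw [h2, sub_self]
    exact sub_eq_zero.mp key
  · intro g
    obtain ⟨s, hs⟩ := G.exists_glue hG (fun i => a i ⊓ Z) hdis hle hsup g
    exact ⟨s, funext fun i => hs i⟩

end Push

/-- Classification of epimorphisms out of the constant sheaf `k_X` on a Boolean
locale: any epimorphism `φ : k_X ↠ G` of sheaves of `k`-vector spaces is, up to
isomorphism under `k_X`, the canonical projection `k_X ≅ k_U ⊕ k_{X∖U} → k_U` for a
unique open `U`. Equivalently (in the abelian category of sheaves), its kernel is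
`k_{X∖U}`, the subsheaf of sections vanishing on `U`, for a unique open `U`.

Here `KX` is the constant sheaf `k_X`, characterized by its universal property: it
represents global sections, via the global section `one`. -/
theorem epi_from_unit_is_projection_onto_clopen
    (KX : KPresheaf B k) (hKX : KX.IsSheaf) (one : KX.obj ⊤)
    (hone : ∀ G : KPresheaf B k, G.IsSheaf → ∀ y : G.obj ⊤,
      ∃! φ : KHom KX G, φ.map ⊤ one = y)
    (G : KPresheaf B k) (hG : G.IsSheaf) (φ : KHom KX G) (hφ : KEpi φ) :
    ∃! U : B, ∀ (V : B) (x : KX.obj V),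
      φ.map V x = 0 ↔ KX.res (inf_le_left : V ⊓ U ≤ V) x = 0 := by
  classical
  obtain ⟨τ, hτ, -⟩ := hone KM KM_isSheaf unitKM
  have hσunit : (sigmaHom KX hKX one).map ⊤ unitKM = one := sigmaHom_unit KX hKX one
  -- σ ∘ τ = id
  have hστ : ∀ (V : B) (x : KX.obj V),
      (sigmaHom KX hKX one).map V (τ.map V x) = x := by
    intro V x
    have hid : ((sigmaHom KX hKX one).comp τ)
        = (⟨fun V => LinearMap.id, by intros; rfl⟩ : KHom KX KX) := by
      refine (hone KX hKX one).unique ?_ rfl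
      show (sigmaHom KX hKX one).map ⊤ (τ.map ⊤ one) = one
      rw [hτ, hσunit]
    exact congrArg (fun (ψ : KHom KX KX) => ψ.map V x) hid
  -- nondegeneracy of the unit section
  have hone_ne : ∀ W : B, KX.res (le_top : W ≤ ⊤) one = 0 → W = ⊥ := by
    intro W h0
    have h1 : (KM : KPresheaf B k).res (le_top : W ≤ ⊤) unitKM = 0 := by
      rw [← hτ, τ.natural (le_top : W ≤ ⊤) one, h0, map_zero]
    have h2 : unitKM.1 (1 : k) ⊓ W = zeroF W (1 : k) :=
      congrFun (congrArg Subtype.val h1) 1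
    rw [show unitKM.1 (1 : k) = (⊤ : B) from if_pos rfl, top_inf_eq] at h2
    rw [h2]
    show (if (1 : k) = 0 then W else ⊥) = ⊥
    rw [if_neg (one_ne_zero (α := k))]
  -- the vanishing locus of y
  set y : G.obj ⊤ := φ.map ⊤ one with hydef
  set S : Set B := {W | G.res (le_top : W ≤ ⊤) y = 0} with hSdef
  set Z : B := sSup S with hZdef
  have hyZ : G.res (le_top : Z ≤ ⊤) y = 0 := by
    refine G.eq_zero_of_res_cover hG (ι := S) (fun W => (W : B))
      (fun W => le_sSup W.2) (le_of_eq (sSup_eq_iSup' S)) _ fun W => ?_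
    rw [G.res_comp]
    exact W.2
  have hS_of : ∀ {W : B}, W ≤ Z → G.res (le_top : W ≤ ⊤) y = 0 := by
    intro W hW
    have h1 : G.res hW (G.res (le_top : Z ≤ ⊤) y) = 0 := by rw [hyZ, map_zero]
    rw [G.res_comp] at h1
    exact h1
  -- φ vanishes on Z
  have phiZ : ∀ (V : B) (x : KX.obj V),
      G.res (inf_le_left : V ⊓ Z ≤ V) (φ.map V x) = 0 := by
    intro V x
    let ψ1 : KHom KX (push G Z) :=
      ⟨fun V => (G.res (inf_le_left : V ⊓ Z ≤ V)).comp (φ.map V), by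
        intro V W h x
        show G.res (inf_le_inf_right Z h) (G.res inf_le_left (φ.map W x))
            = G.res inf_le_left (φ.map V (KX.res h x))
        rw [← φ.natural h x, G.res_comp, G.res_comp]⟩
    let ψ0 : KHom KX (push G Z) :=
      ⟨fun V => 0, by
        intro V W h x
        simp only [LinearMap.zero_apply, map_zero]⟩
    have heq : ψ1 = ψ0 := by
      refine (hone (push G Z) (push_isSheaf G hG Z) 0).unique ?_ rfl
      show G.res (inf_le_left : ⊤ ⊓ Z ≤ ⊤) (φ.map ⊤ one) = 0
      exact hS_of (inf_le_right : ⊤ ⊓ Z ≤ Z)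
    exact congrArg (fun (ψ : KHom KX (push G Z)) => ψ.map V x) heq
  set U : B := Zᶜ with hUdef
  have hMain : ∀ (V : B) (x : KX.obj V),
      φ.map V x = 0 ↔ KX.res (inf_le_left : V ⊓ U ≤ V) x = 0 := by
    intro V x
    constructor
    · intro hx
      set p : (KM : KPresheaf B k).obj V := τ.map V x with hpdef
      have hxσ : (sigmaHom KX hKX one).map V p = x := hστ V x
      have pieces : ∀ c : k, c ≠ 0 → p.1 c ≤ Z := by
        intro c hc
        have h1 : KX.res (p.2.le c) x = c • KX.res (le_top : p.1 c ≤ ⊤) one := by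
          rw [← hxσ]
          exact sigmaFun_res_le KX hKX one V p le_rfl (p.2.le c)
        have h2 : G.res (p.2.le c) (φ.map V x) = 0 := by rw [hx, map_zero]
        rw [φ.natural (p.2.le c) x, h1, map_smul] at h2
        have h3 : φ.map (p.1 c) (KX.res (le_top : p.1 c ≤ ⊤) one)
            = G.res (le_top : p.1 c ≤ ⊤) y :=
          (φ.natural (le_top : p.1 c ≤ ⊤) one).symm
        rw [h3] at h2
        have h4 : G.res (le_top : p.1 c ≤ ⊤) y = 0 := by
          have h5 := congrArg (fun v : G.obj (p.1 c) => c⁻¹ • v) h2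
          simp only [smul_zero] at h5
          rw [← mul_smul, inv_mul_cancel₀ hc, one_smul] at h5
          exact h5
        exact le_sSup h4
      have hbots : ∀ c : k, c ≠ 0 → p.1 c ⊓ (V ⊓ U) = ⊥ := by
        intro c hc
        refine le_bot_iff.mp ?_
        calc p.1 c ⊓ (V ⊓ U) ≤ Z ⊓ U := inf_le_inf (pieces c hc) inf_le_right
          _ = ⊥ := by rw [hUdef, inf_compl_eq_bot]
      have hres0 : KM.res (inf_le_left : V ⊓ U ≤ V) p = 0 := by
        refine Subtype.ext (funext fun c => ?_)
        show p.1 c ⊓ (V ⊓ U) = zeroF (V ⊓ U) c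
        by_cases hc : c = 0
        · subst hc
          rw [show zeroF (V ⊓ U) (0 : k) = V ⊓ U from if_pos rfl]
          refine le_antisymm inf_le_right ?_
          have hstep : (⨆ c, p.1 c ⊓ (V ⊓ U)) = p.1 0 ⊓ (V ⊓ U) :=
            iSup_eq_of_unique (fun c => p.1 c ⊓ (V ⊓ U)) 0 (fun c hc => hbots c hc)
          calc V ⊓ U ≤ (⨆ c, p.1 c) ⊓ (V ⊓ U) :=
              le_inf (inf_le_left.trans (le_of_eq p.2.2.symm)) le_rfl
            _ = ⨆ c, p.1 c ⊓ (V ⊓ U) := iSup_inf_eq _ _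
            _ = p.1 0 ⊓ (V ⊓ U) := hstep
        · rw [hbots c hc, show zeroF (V ⊓ U) c = ⊥ from if_neg hc]
      calc KX.res (inf_le_left : V ⊓ U ≤ V) x
          = KX.res (inf_le_left : V ⊓ U ≤ V) ((sigmaHom KX hKX one).map V p) := by
            rw [hxσ]
        _ = (sigmaHom KX hKX one).map (V ⊓ U) (KM.res inf_le_left p) :=
            (sigmaHom KX hKX one).natural inf_le_left p
        _ = (sigmaHom KX hKX one).map (V ⊓ U) 0 := by rw [hres0]
        _ = 0 := map_zero _
    · intro hres
      refine G.eq_zero_of_res_disjoint hG (fun b : Bool => cond b (V ⊓ U) (V ⊓ Z)) ?_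
        (fun b => by cases b <;> exact inf_le_left) ?_ _ ?_
      · have hUZ : (V ⊓ U) ⊓ (V ⊓ Z) = ⊥ := by
          refine le_bot_iff.mp ?_
          calc (V ⊓ U) ⊓ (V ⊓ Z) ≤ U ⊓ Z := inf_le_inf inf_le_right inf_le_right
            _ = ⊥ := by rw [hUdef, compl_inf_eq_bot]
        intro b b' hbb'
        cases b <;> cases b'
        · exact absurd rfl hbb'
        · show (V ⊓ Z) ⊓ (V ⊓ U) = ⊥
          rw [inf_comm]
          exact hUZ
        · exact hUZ
        · exact absurd rfl hbb'
      · rw [iSup_bool_eq]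
        show V ≤ V ⊓ U ⊔ V ⊓ Z
        rw [← inf_sup_left, hUdef, compl_sup_eq_top, inf_top_eq]
      · intro b
        cases b
        · exact phiZ V x
        · show G.res (inf_le_left : V ⊓ U ≤ V) (φ.map V x) = 0
          rw [φ.natural (inf_le_left : V ⊓ U ≤ V) x, hres, map_zero]
  -- uniqueness
  have hsub : ∀ U1 U2 : B,
      (∀ (V : B) (x : KX.obj V), φ.map V x = 0 ↔ KX.res (inf_le_left : V ⊓ U1 ≤ V) x = 0) →
      (∀ (V : B) (x : KX.obj V), φ.map V x = 0 ↔ KX.res (inf_le_left : V ⊓ U2 ≤ V) x = 0) →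
      U1 ⊓ U2ᶜ = ⊥ := by
    intro U1 U2 hP1 hP2
    set D : B := U1 ⊓ U2ᶜ with hDdef
    set x : KX.obj D := KX.res (le_top : D ≤ ⊤) one with hxdef
    have h1 : KX.res (inf_le_left : D ⊓ U2 ≤ D) x = 0 := by
      refine KX.eq_zero_of_le_bot hKX ?_ _
      calc D ⊓ U2 ≤ U2ᶜ ⊓ U2 := inf_le_inf (show D ≤ U2ᶜ from inf_le_right) le_rfl
        _ = ⊥ := compl_inf_eq_bot
    have h2 : φ.map D x = 0 := (hP2 D x).mpr h1
    have h3 : KX.res (inf_le_left : D ⊓ U1 ≤ D) x = 0 := (hP1 D x).mp h2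
    have h4 : x = 0 := by
      have hDD : D ≤ D ⊓ U1 := le_inf le_rfl (show D ≤ U1 from inf_le_left)
      have h5 : KX.res hDD (KX.res (inf_le_left : D ⊓ U1 ≤ D) x) = x := by
        rw [KX.res_comp]
        exact KX.res_refl D x
      rw [h3, map_zero] at h5
      exact h5.symm
    exact hone_ne D h4
  refine ⟨U, hMain, fun U' hU' => ?_⟩
  have hA : U' ⊓ Uᶜ = ⊥ := hsub U' U hU' hMain
  have hB : U ⊓ U'ᶜ = ⊥ := hsub U U' hMain hU'
  have hle1 : U' ≤ U := by
    calc U' = U' ⊓ (U ⊔ Uᶜ) := by rw [sup_compl_eq_top, inf_top_eq]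
      _ = U' ⊓ U ⊔ U' ⊓ Uᶜ := inf_sup_left _ _ _
      _ = U' ⊓ U := by rw [hA, sup_bot_eq]
      _ ≤ U := inf_le_right
  have hle2 : U ≤ U' := by
    calc U = U ⊓ (U' ⊔ U'ᶜ) := by rw [sup_compl_eq_top, inf_top_eq]
      _ = U ⊓ U' ⊔ U ⊓ U'ᶜ := inf_sup_left _ _ _
      _ = U ⊓ U' := by rw [hB, sup_bot_eq]
      _ ≤ U' := inf_le_right
  exact le_antisymm hle1 hle2
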